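/- Let (Ω, 𝒜, ℙ) be a probability space, and for each n let Z_n : Ω → ℝ^d and Z : Ω → ℝ^d be random vectors such that Z_n(ω) → Z(ω) for ℙ-almost all ω. Fix a finite index set P and for each ω let E(ω) := argmin_{p ∈ P} Z(ω)_p and E_n(ω) := argmin_{p ∈ P} (Z_n(ω))_p. Then for every subset M ⊆ P: liminf_{n→∞} ℙ({ω : E_n(ω) ⊆ M}) ≥ ℙ({ω : E(ω) ⊆ M}). -/
import Mathlib


open MeasureTheory Filter

/-- Let `(Zₙ)`, `Z` be random vectors indexed by a finite set `P` with `Zₙ(ω) → Z(ω)`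
for a.e. `ω`. With `E(ω)` the argmin set of `Z(ω)` and `Eₙ(ω)` that of `Zₙ(ω)`, for every
`M ⊆ P`: `liminf_n ℙ({Eₙ ⊆ M}) ≥ ℙ({E ⊆ M})`. -/
theorem stmt_18 {Ω : Type*} [MeasurableSpace Ω] (ℙ : Measure Ω) [IsProbabilityMeasure ℙ]
    (P : Type*) [Fintype P] [Nonempty P]
    (Zn : ℕ → Ω → P → ℝ) (Z : Ω → P → ℝ)
    (hZn : ∀ n, Measurable (Zn n)) (hZ : Measurable Z)
    (hconv : ∀ᵐ ω ∂ℙ, ∀ p : P, Tendsto (fun n => Zn n ω p) atTop (nhds (Z ω p)))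
    (M : Set P) :
    ℙ {ω | {p | ∀ q, Z ω p ≤ Z ω q} ⊆ M} ≤
      atTop.liminf (fun n => ℙ {ω | {p | ∀ q, Zn n ω p ≤ Zn n ω q} ⊆ M}) := by
  set A : Set Ω := {ω | {p | ∀ q, Z ω p ≤ Z ω q} ⊆ M} with hA
  set An : ℕ → Set Ω := fun n => {ω | {p | ∀ q, Zn n ω p ≤ Zn n ω q} ⊆ M} with hAn
  -- the key a.e. statement: on A, eventually ω ∈ An n
  have key : ∀ᵐ ω ∂ℙ, ω ∈ A → ∀ᶠ n in atTop, ω ∈ An n := by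
    filter_upwards [hconv] with ω hω hmem
    -- pick an argmin of Z ω
    obtain ⟨q₀, -, hq₀⟩ := Finset.exists_min_image (Finset.univ : Finset P) (Z ω)
      ⟨Classical.arbitrary P, Finset.mem_univ _⟩
    have hq₀' : ∀ r, Z ω q₀ ≤ Z ω r := fun r => hq₀ r (Finset.mem_univ r)
    -- for each p not in the argmin set of Z ω, eventually p is not argmin of Zn n ω
    have hev : ∀ᶠ n in atTop, ∀ p : P, p ∉ {p | ∀ q, Z ω p ≤ Z ω q} →
        ¬ (∀ q, Zn n ω p ≤ Zn n ω q) := by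
      rw [eventually_all]
      intro p
      by_cases hp : p ∈ {p | ∀ q, Z ω p ≤ Z ω q}
      · exact Eventually.of_forall fun n h => absurd hp h
      · -- there is r with Z ω r < Z ω p; then Z ω q₀ < Z ω p
        simp only [Set.mem_setOf_eq, not_forall, not_le] at hp
        obtain ⟨r, hr⟩ := hp
        have hlt : Z ω q₀ < Z ω p := lt_of_le_of_lt (hq₀' r) hr
        have := (hω q₀).eventually_lt (hω p) hlt
        filter_upwards [this] with n hn _ hall
        exact absurd (hall q₀) (not_le.mpr hn)
    filter_upwards [hev] with n hn
    intro p hp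
    by_contra hpM
    exact hn p (fun hp' => hpM (hmem hp')) hp
  -- measurability of An n
  have hmeasAn : ∀ n, MeasurableSet (An n) := by
    intro n
    have : An n = ⋂ (p : P), {ω | (∀ q, Zn n ω p ≤ Zn n ω q) → p ∈ M} := by
      ext ω; simp [hAn, Set.subset_def]
    rw [this]
    refine MeasurableSet.iInter fun p => ?_
    by_cases hp : p ∈ M
    · simp only [hp]
      convert MeasurableSet.univ using 1
      ext ω; simp
    · have : {ω | (∀ q, Zn n ω p ≤ Zn n ω q) → p ∈ M}
          = (⋂ q, {ω | Zn n ω p ≤ Zn n ω q})ᶜ := by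
        ext ω; simp [hp]
      rw [this]
      refine (MeasurableSet.iInter fun q => ?_).compl
      exact measurableSet_le ((measurable_pi_apply p).comp (hZn n))
        ((measurable_pi_apply q).comp (hZn n))
  -- define the monotone tails
  set C : ℕ → Set Ω := fun n => ⋂ k ∈ Set.Ici n, An k with hC
  have hmono : Monotone C := fun m n hmn =>
    Set.biInter_subset_biInter_left (fun k hk => le_trans hmn hk)
  have hsub : ℙ A ≤ ℙ (⋃ n, C n) := by
    refine measure_mono_ae ?_
    filter_upwards [key] with ω hω hmem
    obtain ⟨n, hn⟩ := (hω hmem).exists_forall_of_atTop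
    exact Set.mem_iUnion.mpr ⟨n, Set.mem_iInter₂.mpr fun k hk => hn k hk⟩
  have hCmeas : ∀ n, MeasurableSet (C n) := fun n =>
    MeasurableSet.biInter (Set.to_countable _) fun k _ => hmeasAn k
  have hunion : ℙ (⋃ n, C n) = ⨆ n, ℙ (C n) := hmono.directed_le.measure_iUnion
  refine hsub.trans ?_
  rw [hunion, liminf_eq_iSup_iInf_of_nat]
  refine iSup_mono fun n => ?_
  exact le_iInf₂ fun k hk => measure_mono (Set.biInter_subset_of_mem hk)
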